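/- There exists an absolute constant C>0 such that for every quadratic polynomial f as in the context and every real u ≥ 2, one has W(u) ≤ C·V(u), i.e. ∏_{p<u, p prime}(1−1/p)(1−χ_Δ(p)/p) ≤ C·∏_{p<u, p prime}(1−ρ(p)/p). -/

import Mathlib

open Finset

noncomputable section

/-- The Kronecker symbol `(D/p)` at a prime `p`. -/
def kroneckerPrime (D : ℤ) (p : ℕ) : ℤ :=
  if p = 2 then (if D % 2 = 0 then 0 else if D % 8 = 1 ∨ D % 8 = 7 then 1 else -1)
  else jacobiSym D p

/-- The Kronecker symbol `χ_D(n) = (D/n)` for `n : ℕ`, extended multiplicatively. -/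
def kronecker (D : ℤ) (n : ℕ) : ℤ :=
  n.factorization.prod fun p k => kroneckerPrime D p ^ k

/-- `L(1, χ_D) = ∑_{n ≥ 1} χ_D(n)/n`, as the limit of its partial sums. -/
def LOne (D : ℤ) : ℝ :=
  Filter.limUnder Filter.atTop fun N : ℕ => ∑ n ∈ Finset.Icc 1 N, (kronecker D n : ℝ) / n

/-- `λ = 1 * χ_D`, i.e. `λ(n) = ∑_{d ∣ n} χ_D(d)`. -/
def lamArith (D : ℤ) (n : ℕ) : ℤ := ∑ d ∈ n.divisors, kronecker D d

/-- The quadratic polynomial `f(n) = a n² + b n + c`. -/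
def fInt (a b c n : ℤ) : ℤ := a * n ^ 2 + b * n + c

/-- `ρ(d) = #{n mod d : f(n) ≡ 0 (mod d)}`. -/
def rho (a b c : ℤ) (d : ℕ) : ℕ :=
  ((Finset.range d).filter fun n : ℕ => (d : ℤ) ∣ fInt a b c (n : ℤ)).card

/-- `A = #𝒜 = #{n ∈ ℤ : 0 ≤ f(n) ≤ N}`. -/
def Acard (a b c N : ℤ) : ℕ := Set.ncard {n : ℤ | 0 ≤ fInt a b c n ∧ fInt a b c n ≤ N}

/-- `A_d = #{n ∈ 𝒜 : d ∣ f(n)}`. -/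
def Adcard (a b c N : ℤ) (d : ℕ) : ℕ :=
  Set.ncard {n : ℤ | 0 ≤ fInt a b c n ∧ fInt a b c n ≤ N ∧ (d : ℤ) ∣ fInt a b c n}

/-- The finset of primes `p < x`. -/
def primesLT (x : ℝ) : Finset ℕ :=
  (Finset.range (Nat.ceil x + 1)).filter fun p => p.Prime ∧ (p : ℝ) < x

/-- `V(x) = ∏_{p < x} (1 - ρ(p)/p)`. -/
def Vprod (a b c : ℤ) (x : ℝ) : ℝ := ∏ p ∈ primesLT x, (1 - (rho a b c p : ℝ) / p)

/-- `W(x) = ∏_{p < x} (1 - 1/p)(1 - χ_D(p)/p)`. -/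
def Wprod (D : ℤ) (x : ℝ) : ℝ :=
  ∏ p ∈ primesLT x, ((1 - 1 / (p : ℝ)) * (1 - (kronecker D p : ℝ) / p))

/-- `P(z) = ∏_{p < z} p`. -/
def Pprod (z : ℝ) : ℕ := ∏ p ∈ primesLT z, p

/-- `S(𝒜, z) = #{n ∈ 𝒜 : gcd(f(n), P(z)) = 1}`. -/
def Ssieve (a b c N : ℤ) (z : ℝ) : ℕ :=
  Set.ncard {n : ℤ | 0 ≤ fInt a b c n ∧ fInt a b c n ≤ N ∧
    Int.gcd (fInt a b c n) (Pprod z) = 1}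

/-- `S(𝒜_p, z) = #{n ∈ 𝒜 : p ∣ f(n), gcd(f(n), P(z)) = 1}`. -/
def SsieveP (a b c N : ℤ) (p : ℕ) (z : ℝ) : ℕ :=
  Set.ncard {n : ℤ | 0 ≤ fInt a b c n ∧ fInt a b c n ≤ N ∧ (p : ℤ) ∣ fInt a b c n ∧
    Int.gcd (fInt a b c n) (Pprod z) = 1}

/-- `π_f(N) = #{n ∈ ℤ : 0 ≤ f(n) ≤ N, f(n) prime}`. -/
def piF (a b c N : ℤ) : ℕ :=
  Set.ncard {n : ℤ | 0 ≤ fInt a b c n ∧ fInt a b c n ≤ N ∧ Prime (fInt a b c n)}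

/-- `δ(x) = ∑_{x ≤ p ≤ A} λ(p)/p`. -/
def deltaSum (a b c N D : ℤ) (x : ℝ) : ℝ :=
  ∑ p ∈ (Finset.range (Acard a b c N + 1)).filter (fun p : ℕ => p.Prime ∧ x ≤ (p : ℝ)),
    (lamArith D p : ℝ) / p

/-- `β = -log(L(1,χ_D) · log|D|)`. -/
def betaE (D : ℤ) : ℝ := - Real.log (LOne D * Real.log |(D : ℝ)|)

/-- `g(Δ) = Δ e^{-β/2}` for `Δ > 0` and `|Δ|/(4|a| - e^{-β/2})` for `Δ < 0`. -/
def gDisc (a D : ℤ) : ℝ :=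
  if 0 < D then (D : ℝ) * Real.exp (-(betaE D) / 2)
  else |(D : ℝ)| / (4 * |(a : ℝ)| - Real.exp (-(betaE D) / 2))

lemma kronecker_prime_eq (D : ℤ) {p : ℕ} (hp : p.Prime) :
    kronecker D p = kroneckerPrime D p := by
  unfold kronecker
  rw [hp.factorization, Finsupp.prod_single_index (by exact pow_zero _), pow_one]

lemma kronecker_odd (D : ℤ) {p : ℕ} [Fact p.Prime] (h2 : p ≠ 2) :
    kronecker D p = legendreSym p D := by
  rw [kronecker_prime_eq D Fact.out]
  unfold kroneckerPrime
  rw [if_neg h2, jacobiSym.legendreSym.to_jacobiSym]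

lemma rho_eq (a b c : ℤ) {p : ℕ} [hp : Fact p.Prime] :
    rho a b c p =
      (Finset.univ.filter fun x : ZMod p =>
        (a : ZMod p) * (x * x) + (b : ZMod p) * x + (c : ZMod p) = 0).card := by
  haveI : NeZero p := ⟨hp.out.ne_zero⟩
  unfold rho
  apply Finset.card_bij' (fun n _ => ((n : ℕ) : ZMod p)) (fun x _ => x.val)
  · intro n hn
    simp only [Finset.mem_filter, Finset.mem_range] at hn
    simp only [Finset.mem_filter, Finset.mem_univ, true_and]
    have h0 : ((fInt a b c (n : ℤ) : ℤ) : ZMod p) = 0 :=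
      (ZMod.intCast_zmod_eq_zero_iff_dvd _ p).mpr hn.2
    unfold fInt at h0
    push_cast at h0
    rw [← h0]; ring
  · intro x hx
    simp only [Finset.mem_filter, Finset.mem_univ, true_and] at hx
    simp only [Finset.mem_filter, Finset.mem_range]
    refine ⟨ZMod.val_lt x, ?_⟩
    rw [← ZMod.intCast_zmod_eq_zero_iff_dvd]
    unfold fInt
    have hv : ((x.val : ℕ) : ZMod p) = x := ZMod.natCast_rightInverse x
    push_cast
    rw [hv, ← hx]; ring
  · intro n hn
    simp only [Finset.mem_filter, Finset.mem_range] at hn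
    exact ZMod.val_natCast_of_lt hn.1
  · intro x _
    exact ZMod.natCast_rightInverse x

lemma key_odd (a b c D : ℤ) (hd : D = b^2 - 4*a*c) (hg : Int.gcd a (Int.gcd b c) = 1)
    {p : ℕ} (hp : p.Prime) (h2 : p ≠ 2) :
    (1 - 1/(p:ℝ)) * (1 - (kronecker D p : ℝ)/p)
      ≤ (1 + 4/(p:ℝ)^2) * (1 - (rho a b c p : ℝ)/p) := by
  haveI F : Fact p.Prime := ⟨hp⟩
  haveI : NeZero p := ⟨hp.ne_zero⟩
  have h2K : (2 : ZMod p) ≠ 0 := by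
    intro h
    have : ((2:ℕ) : ZMod p) = 0 := by exact_mod_cast h
    have := (ZMod.natCast_eq_zero_iff 2 p).mp this
    exact h2 ((Nat.prime_dvd_prime_iff_eq hp Nat.prime_two).mp this)
  haveI : NeZero (2 : ZMod p) := ⟨h2K⟩
  have hp3 : (3:ℝ) ≤ (p:ℝ) := by
    have : 3 ≤ p := by
      have := hp.two_le; omega
    exact_mod_cast this
  have hx0 : (0:ℝ) < (p:ℝ) := by positivity
  have hu0 : (0:ℝ) < 1/(p:ℝ) := by positivity
  have hu : 1/(p:ℝ) ≤ 1/3 := by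
    rw [div_le_div_iff₀ hx0 (by norm_num)]; linarith
  have hDbar : ((D:ℤ) : ZMod p) = discrim (a : ZMod p) (b : ZMod p) (c : ZMod p) := by
    rw [hd, discrim]; push_cast; ring
  have hχ : kronecker D p = legendreSym p D := kronecker_odd D h2
  have hρ := rho_eq a b c (p := p)
  by_cases hA : (a : ZMod p) = 0
  · by_cases hB : (b : ZMod p) = 0
    · have hC : (c : ZMod p) ≠ 0 := by
        intro hC
        have da : (p:ℤ) ∣ a := (ZMod.intCast_zmod_eq_zero_iff_dvd a p).mp hA
        have db : (p:ℤ) ∣ b := (ZMod.intCast_zmod_eq_zero_iff_dvd b p).mp hB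
        have dc : (p:ℤ) ∣ c := (ZMod.intCast_zmod_eq_zero_iff_dvd c p).mp hC
        have : (p:ℤ) ∣ (Int.gcd a (Int.gcd b c) : ℤ) :=
          Int.dvd_coe_gcd da (Int.dvd_coe_gcd db dc)
        rw [hg] at this
        have := Int.le_of_dvd one_pos this
        have := hp.two_le
        omega
      have hs : (Finset.univ.filter fun x : ZMod p =>
          (a : ZMod p) * (x * x) + (b : ZMod p) * x + (c : ZMod p) = 0) = ∅ := by
        ext x; simp [hA, hB, hC]
      have hρ0 : rho a b c p = 0 := by rw [hρ, hs]; simp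
      have hχ0 : kronecker D p = 0 := by
        rw [hχ, legendreSym.eq_zero_iff]
        rw [hDbar, discrim, hA, hB]; ring
      rw [hρ0, hχ0]
      push_cast
      have hxne : (p:ℝ) ≠ 0 := ne_of_gt hx0
      field_simp
      nlinarith [hp3, hx0]
    · have hs : (Finset.univ.filter fun x : ZMod p =>
          (a : ZMod p) * (x * x) + (b : ZMod p) * x + (c : ZMod p) = 0) = {-(c:ZMod p)/(b:ZMod p)} := by
        ext x
        simp only [Finset.mem_filter, Finset.mem_univ, true_and, Finset.mem_singleton, hA,
          zero_mul, zero_add]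
        constructor
        · intro h
          field_simp
          linear_combination h
        · intro h
          subst h
          field_simp
          ring
      have hρ1 : rho a b c p = 1 := by rw [hρ, hs]; simp
      have hχ1 : kronecker D p = 1 := by
        rw [hχ]
        have hDne : ((D:ℤ) : ZMod p) ≠ 0 := by
          rw [hDbar, discrim, hA]
          intro h
          apply hB
          have : (b:ZMod p)^2 = 0 := by linear_combination h
          exact pow_eq_zero_iff (by norm_num) |>.mp this
        rw [legendreSym.eq_one_iff _ hDne]
        refine ⟨(b : ZMod p), ?_⟩
        rw [hDbar, discrim, hA]; ring
      rw [hρ1, hχ1]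
      push_cast
      have hxne : (p:ℝ) ≠ 0 := ne_of_gt hx0
      field_simp
      nlinarith [hp3, hx0]
  · by_cases hsq : IsSquare ((D:ℤ) : ZMod p)
    · obtain ⟨s, hs⟩ := hsq
      have hdisc : discrim (a : ZMod p) (b : ZMod p) (c : ZMod p) = s * s := by
        rw [← hDbar]; exact hs
      by_cases hs0 : s = 0
      · have hd0 : discrim (a : ZMod p) (b : ZMod p) (c : ZMod p) = 0 := by
          rw [hdisc, hs0, mul_zero]
        have hset : (Finset.univ.filter fun x : ZMod p =>
            (a : ZMod p) * (x * x) + (b : ZMod p) * x + (c : ZMod p) = 0)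
            = {-(b:ZMod p)/(2*(a:ZMod p))} := by
          ext x
          simp only [Finset.mem_filter, Finset.mem_univ, true_and, Finset.mem_singleton]
          exact quadratic_eq_zero_iff_of_discrim_eq_zero hA hd0 x
        have hρ1 : rho a b c p = 1 := by rw [hρ, hset]; simp
        have hχ0 : kronecker D p = 0 := by
          rw [hχ, legendreSym.eq_zero_iff, hs, hs0, mul_zero]
        rw [hρ1, hχ0]
        push_cast
        have hxne : (p:ℝ) ≠ 0 := ne_of_gt hx0
        field_simp
        nlinarith [hp3, hx0]
      · have hr12 : (-(b:ZMod p) + s) / (2*(a:ZMod p)) ≠ (-(b:ZMod p) - s) / (2*(a:ZMod p)) := by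
          intro h
          have h2a : (2:ZMod p) * (a:ZMod p) ≠ 0 := mul_ne_zero h2K hA
          rw [div_eq_div_iff h2a h2a] at h
          apply hs0
          have h2s : (2:ZMod p) * (a:ZMod p) * (2 * s) = 0 := by linear_combination h
          rcases mul_eq_zero.mp h2s with h' | h'
          · exact absurd h' h2a
          · rcases mul_eq_zero.mp h' with h'' | h''
            · exact absurd h'' h2K
            · exact h''
        have hset : (Finset.univ.filter fun x : ZMod p =>
            (a : ZMod p) * (x * x) + (b : ZMod p) * x + (c : ZMod p) = 0)
            = {(-(b:ZMod p) + s) / (2*(a:ZMod p)), (-(b:ZMod p) - s) / (2*(a:ZMod p))} := by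
          ext x
          simp only [Finset.mem_filter, Finset.mem_univ, true_and, Finset.mem_insert,
            Finset.mem_singleton]
          exact quadratic_eq_zero_iff hA hdisc x
        have hρ2 : rho a b c p = 2 := by
          rw [hρ, hset, Finset.card_pair hr12]
        have hχ1 : kronecker D p = 1 := by
          rw [hχ]
          have hDne : ((D:ℤ) : ZMod p) ≠ 0 := by
            rw [hs]
            exact mul_ne_zero hs0 hs0
          rw [legendreSym.eq_one_iff _ hDne]
          exact ⟨s, hs⟩
        rw [hρ2, hχ1]
        push_cast
        have hxne : (p:ℝ) ≠ 0 := ne_of_gt hx0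
        field_simp
        nlinarith [hp3, hx0, sq_nonneg ((p:ℝ) - 3), mul_pos hx0 hx0]
    · have hset : (Finset.univ.filter fun x : ZMod p =>
          (a : ZMod p) * (x * x) + (b : ZMod p) * x + (c : ZMod p) = 0) = ∅ := by
        ext x
        simp only [Finset.mem_filter, Finset.mem_univ, true_and, Finset.notMem_empty,
          iff_false]
        apply quadratic_ne_zero_of_discrim_ne_sq
        intro t ht
        exact hsq ⟨t, by rw [hDbar, ht, sq]⟩
      have hρ0 : rho a b c p = 0 := by rw [hρ, hset]; simp
      have hχn : kronecker D p = -1 := by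
        rw [hχ, legendreSym.eq_neg_one_iff]
        exact hsq
      rw [hρ0, hχn]
      push_cast
      have hxne : (p:ℝ) ≠ 0 := ne_of_gt hx0
      field_simp
      nlinarith [hp3, hx0]

lemma kronecker_bounds (D : ℤ) {p : ℕ} (hp : p.Prime) :
    -1 ≤ kronecker D p ∧ kronecker D p ≤ 1 := by
  rw [kronecker_prime_eq D hp]
  unfold kroneckerPrime
  split_ifs with h1 h2 h3
  · norm_num
  · norm_num
  · norm_num
  · rcases jacobiSym.trichotomy D p with h | h | h <;> rw [h] <;> norm_num

lemma rho_two_le (a b c : ℤ) (h : Odd (a+b) ∨ Odd c) : rho a b c 2 ≤ 1 := by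
  unfold rho
  by_contra hlt
  push_neg at hlt
  obtain ⟨x, hx, y, hy, hxy⟩ := Finset.one_lt_card.mp hlt
  simp only [Finset.mem_filter, Finset.mem_range] at hx hy
  have hx2 := hx.1
  have hy2 := hy.1
  have hdvd : (2:ℤ) ∣ fInt a b c 0 ∧ (2:ℤ) ∣ fInt a b c 1 := by
    interval_cases x <;> interval_cases y <;> simp_all <;> constructor <;> simp_all
  have d1 : (2:ℤ) ∣ c := by
    have := hdvd.1; unfold fInt at this; simpa using this
  have d2 : (2:ℤ) ∣ a + b + c := by
    have := hdvd.2; unfold fInt at this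
    have e : a * 1 ^ 2 + b * 1 + c = a + b + c := by ring
    rwa [e] at this
  rcases h with h | h <;> rw [Int.odd_iff] at h <;> omega

lemma key_all (a b c D : ℤ) (hd : D = b^2 - 4*a*c) (hg : Int.gcd a (Int.gcd b c) = 1)
    (hodd : Odd (a + b) ∨ Odd c) {p : ℕ} (hp : p.Prime) :
    (1 - 1/(p:ℝ)) * (1 - (kronecker D p : ℝ)/p)
      ≤ (1 + 4/(p:ℝ)^2) * (1 - (rho a b c p : ℝ)/p) := by
  by_cases h2 : p = 2
  · subst h2
    obtain ⟨hl, hr⟩ := kronecker_bounds D Nat.prime_two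
    have hρ := rho_two_le a b c hodd
    have hlr : (-1:ℝ) ≤ (kronecker D 2 : ℝ) ∧ (kronecker D 2 : ℝ) ≤ 1 := by
      constructor <;> exact_mod_cast (by assumption)
    have hρr : (rho a b c 2 : ℝ) ≤ 1 := by exact_mod_cast hρ
    have hρ0 : (0:ℝ) ≤ (rho a b c 2 : ℝ) := Nat.cast_nonneg _
    push_cast [Nat.cast_ofNat]
    norm_num
    nlinarith [hlr.1, hlr.2, hρr, hρ0]
  · exact key_odd a b c D hd hg hp h2

lemma sum_icc_bound : ∀ M : ℕ, ∑ n ∈ Finset.Icc 2 (M+1), (4:ℝ)/(n:ℝ)^2 ≤ 4 - 4/((M:ℝ)+1) := by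
  intro M
  induction M with
  | zero => simp
  | succ m ih =>
    rw [show m + 1 + 1 = (m + 1) + 1 from rfl,
      Finset.sum_Icc_succ_top (by omega : 2 ≤ m + 1 + 1)]
    have hm : (0:ℝ) ≤ (m:ℝ) := Nat.cast_nonneg m
    have h1 : (0:ℝ) < (m:ℝ) + 1 := by linarith
    have h2 : (0:ℝ) < (m:ℝ) + 2 := by linarith
    have hstep : (4:ℝ)/((m:ℝ)+2)^2 ≤ 4/((m:ℝ)+1) - 4/((m:ℝ)+2) := by
      have e : (4:ℝ)/((m:ℝ)+1) - 4/((m:ℝ)+2) = 4/(((m:ℝ)+1)*((m:ℝ)+2)) := by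
        field_simp; ring
      rw [e, div_le_div_iff₀ (by positivity) (by positivity)]
      nlinarith
    push_cast
    push_cast at ih
    have e2 : ((m:ℝ)+1+1) = (m:ℝ)+2 := by ring
    rw [e2]
    linarith

lemma sum_primes_bound (u : ℝ) : ∑ p ∈ primesLT u, (4:ℝ)/(p:ℝ)^2 ≤ 4 := by
  have hsub : primesLT u ⊆ Finset.Icc 2 (Nat.ceil u + 1) := by
    intro p hp
    simp only [primesLT, Finset.mem_filter, Finset.mem_range] at hp
    exact Finset.mem_Icc.mpr ⟨hp.2.1.two_le, by omega⟩
  calc ∑ p ∈ primesLT u, (4:ℝ)/(p:ℝ)^2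
      ≤ ∑ n ∈ Finset.Icc 2 (Nat.ceil u + 1), (4:ℝ)/(n:ℝ)^2 :=
        Finset.sum_le_sum_of_subset_of_nonneg hsub (fun n _ _ => by positivity)
    _ ≤ 4 - 4/((Nat.ceil u : ℝ)+1) := sum_icc_bound (Nat.ceil u)
    _ ≤ 4 := by
        have : (0:ℝ) < (Nat.ceil u : ℝ) + 1 := by positivity
        have : (0:ℝ) ≤ 4/((Nat.ceil u : ℝ)+1) := by positivity
        linarith

lemma rho_le (a b c : ℤ) (d : ℕ) : rho a b c d ≤ d := by
  unfold rho
  calc _ ≤ (Finset.range d).card := Finset.card_filter_le _ _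
    _ = d := Finset.card_range d

theorem W_le_V :
    ∃ C > (0:ℝ), ∀ a b c D : ℤ,
      a ≠ 0 → Int.gcd a (Int.gcd b c) = 1 →
      (Odd (a + b) ∨ Odd c) →
      D = b ^ 2 - 4 * a * c → ¬ IsSquare D →
      ∀ u : ℝ, 2 ≤ u → Wprod D u ≤ C * Vprod a b c u := by
  refine ⟨Real.exp 4, Real.exp_pos 4, ?_⟩
  intro a b c D ha hg hodd hD hsq u hu
  have hprime : ∀ p ∈ primesLT u, p.Prime := fun p hp =>
    ((Finset.mem_filter.mp hp).2).1
  have key : ∀ p ∈ primesLT u,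
      (1 - 1/(p:ℝ)) * (1 - (kronecker D p : ℝ)/p)
        ≤ (1 + 4/(p:ℝ)^2) * (1 - (rho a b c p : ℝ)/p) := fun p hp =>
    key_all a b c D hD hg hodd (hprime p hp)
  have hWnn : ∀ p ∈ primesLT u,
      0 ≤ (1 - 1/(p:ℝ)) * (1 - (kronecker D p : ℝ)/p) := by
    intro p hp
    have hp' := hprime p hp
    have hp2 : (2:ℝ) ≤ (p:ℝ) := by exact_mod_cast hp'.two_le
    have hχ : (kronecker D p : ℝ) ≤ 1 := by
      exact_mod_cast (kronecker_bounds D hp').2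
    have h1 : (1:ℝ)/(p:ℝ) ≤ 1/2 := by
      rw [div_le_div_iff₀ (by linarith) (by norm_num)]; linarith
    have h2 : (kronecker D p : ℝ)/(p:ℝ) ≤ 1 := by
      rw [div_le_one (by linarith)]; linarith
    have h0 : (0:ℝ) < 1/(p:ℝ) := by positivity
    nlinarith
  have hVnn : ∀ p ∈ primesLT u, (0:ℝ) ≤ 1 - (rho a b c p : ℝ)/p := by
    intro p hp
    have hp' := hprime p hp
    have hp0 : (0:ℝ) < (p:ℝ) := by exact_mod_cast hp'.pos
    have : (rho a b c p : ℝ) ≤ (p:ℝ) := by exact_mod_cast rho_le a b c p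
    have : (rho a b c p : ℝ)/(p:ℝ) ≤ 1 := by rw [div_le_one hp0]; linarith
    linarith
  have h1 : Wprod D u ≤ ∏ p ∈ primesLT u, ((1 + 4/(p:ℝ)^2) * (1 - (rho a b c p : ℝ)/p)) :=
    Finset.prod_le_prod hWnn key
  rw [Finset.prod_mul_distrib] at h1
  have h2 : ∏ p ∈ primesLT u, (1 + 4/(p:ℝ)^2) ≤ Real.exp 4 := by
    calc ∏ p ∈ primesLT u, (1 + 4/(p:ℝ)^2)
        ≤ ∏ p ∈ primesLT u, Real.exp (4/(p:ℝ)^2) := by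
          apply Finset.prod_le_prod
          · intro p hp; positivity
          · intro p hp
            have := Real.add_one_le_exp (4/(p:ℝ)^2)
            linarith
      _ = Real.exp (∑ p ∈ primesLT u, 4/(p:ℝ)^2) := (Real.exp_sum _ _).symm
      _ ≤ Real.exp 4 := Real.exp_le_exp.mpr (sum_primes_bound u)
  have h3 : (0:ℝ) ≤ Vprod a b c u := Finset.prod_nonneg hVnn
  calc Wprod D u ≤ (∏ p ∈ primesLT u, (1 + 4/(p:ℝ)^2)) * Vprod a b c u := h1
    _ ≤ Real.exp 4 * Vprod a b c u := mul_le_mul_of_nonneg_right h2 h3
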